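/- Let K > 0 be a real number and let u be a complex number with imaginary part Im(u) > 1. Then the Fourier transform of the call payoff s ↦ max(e^s − K, 0) is given by ∫_{ℝ} e^{ius} · max(e^s − K, 0) ds = −K^{iu+1}/(u² − iu), i.e. ∫_{log K}^{∞} (e^{(iu+1)s} − K e^{ius}) ds = −K^{iu+1}/(u² − iu), where K^{iu+1} denotes exp((iu+1)·log K) with the real logarithm of K. -/

import Mathlib

open MeasureTheory Set Filter

lemma cexp_integrableOn_Ioi (c : ℂ) (hc : c.re < 0) (a : ℝ) :
    IntegrableOn (fun x : ℝ => Complex.exp (c * x)) (Ioi a) := by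
  have hb : (0 : ℝ) < -c.re := by linarith
  have h := exp_neg_integrableOn_Ioi a hb
  refine (h.mono' ?_ ?_)
  · exact (Complex.continuous_exp.comp (continuous_const.mul Complex.continuous_ofReal)).aestronglyMeasurable
  · filter_upwards with x
    simp only [Complex.norm_exp]
    have : (c * (x : ℂ)).re = c.re * x := by simp [Complex.mul_re]
    rw [this]
    exact le_of_eq (by ring_nf)

lemma cexp_integral_Ioi (c : ℂ) (hc : c.re < 0) (a : ℝ) :
    (∫ x in Ioi a, Complex.exp (c * x)) = -Complex.exp (c * a) / c := by
  have hc0 : c ≠ 0 := fun h => by simp [h] at hc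
  have hderiv : ∀ x ∈ Ici a, HasDerivAt (fun x : ℝ => Complex.exp (c * x) / c)
      (Complex.exp (c * x)) x := by
    intro x _
    have h1 : HasDerivAt (fun x : ℝ => Complex.exp (c * x)) (Complex.exp (c * x) * c) x := by
      have h2 : HasDerivAt (fun x : ℝ => c * (x : ℂ)) c x := by
        simpa using (Complex.ofRealCLM.hasDerivAt (x := x)).const_mul c
      exact (Complex.hasDerivAt_exp (c * x)).comp x h2
    simpa [mul_div_assoc, mul_div_cancel_right₀ _ hc0] using h1.div_const c
  have htend : Tendsto (fun x : ℝ => Complex.exp (c * x) / c) atTop (nhds 0) := by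
    rw [tendsto_zero_iff_norm_tendsto_zero]
    have h1 : Tendsto (fun x : ℝ => Real.exp (c.re * x) / ‖c‖) atTop (nhds 0) := by
      have h2 : Tendsto (fun x : ℝ => c.re * x) atTop atBot :=
        tendsto_id.const_mul_atTop_of_neg hc
      simpa using (Real.tendsto_exp_atBot.comp h2).div_const ‖c‖
    refine h1.congr fun x => ?_
    simp only [norm_div, Complex.norm_exp]
    congr 2
    simp [Complex.mul_re]
  have := integral_Ioi_of_hasDerivAt_of_tendsto' hderiv (cexp_integrableOn_Ioi c hc a) htend
  rw [this]; ring

theorem call_payoff_fourier_transform (K : ℝ) (hK : 0 < K) (u : ℂ) (hu : 1 < u.im) :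
    (∫ s : ℝ, Complex.exp (Complex.I * u * s) * ((max (Real.exp s - K) 0 : ℝ) : ℂ))
      = - Complex.exp ((Complex.I * u + 1) * (Real.log K : ℂ)) / (u ^ 2 - Complex.I * u) ∧
    (∫ s in Ioi (Real.log K),
        (Complex.exp ((Complex.I * u + 1) * (s : ℂ)) - (K : ℂ) * Complex.exp (Complex.I * u * s)))
      = - Complex.exp ((Complex.I * u + 1) * (Real.log K : ℂ)) / (u ^ 2 - Complex.I * u) := by
  set a := Real.log K
  set c1 : ℂ := Complex.I * u + 1
  set c2 : ℂ := Complex.I * u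
  have hc2re : c2.re = -u.im := by simp [c2]
  have hc1re : c1.re = 1 - u.im := by simp [c1]; ring
  have hc1 : c1.re < 0 := by rw [hc1re]; linarith
  have hc2 : c2.re < 0 := by rw [hc2re]; linarith
  have hc1ne : c1 ≠ 0 := fun h => by simp [h] at hc1
  have hc2ne : c2 ≠ 0 := fun h => by simp [h] at hc2
  have hKa : Real.exp a = K := Real.exp_log hK
  have key : (∫ s in Ioi a,
      (Complex.exp (c1 * (s : ℂ)) - (K : ℂ) * Complex.exp (c2 * s)))
      = - Complex.exp (c1 * (a : ℂ)) / (u ^ 2 - Complex.I * u) := by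
    rw [integral_sub (cexp_integrableOn_Ioi c1 hc1 a)
      ((cexp_integrableOn_Ioi c2 hc2 a).const_mul _), integral_const_mul,
      cexp_integral_Ioi c1 hc1 a, cexp_integral_Ioi c2 hc2 a]
    have hKexp : (K : ℂ) * Complex.exp (c2 * a) = Complex.exp (c1 * a) := by
      have : (K : ℂ) = Complex.exp (a : ℂ) := by
        rw [← Complex.ofReal_exp, hKa]
      rw [this, ← Complex.exp_add]
      congr 1
      simp [c1, c2]; ring
    have hKexp' : (K : ℂ) * (-Complex.exp (c2 * a) / c2) = -Complex.exp (c1 * a) / c2 := by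
      rw [← hKexp]; ring
    rw [hKexp']
    have hdenom : u ^ 2 - Complex.I * u = -(c1 * c2) := by
      simp only [c1, c2]
      ring_nf
      rw [Complex.I_sq]
      ring
    rw [hdenom]
    field_simp
    ring
  constructor
  · have heq : (∫ s : ℝ, Complex.exp (Complex.I * u * s) * ((max (Real.exp s - K) 0 : ℝ) : ℂ))
        = ∫ s in Ioi a, (Complex.exp (c1 * (s : ℂ)) - (K : ℂ) * Complex.exp (c2 * s)) := by
      rw [← setIntegral_eq_integral_of_forall_compl_eq_zero
        (s := Ioi a) (f := fun s : ℝ => Complex.exp (Complex.I * u * s) * ((max (Real.exp s - K) 0 : ℝ) : ℂ))]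
      · apply setIntegral_congr_fun measurableSet_Ioi
        intro s hs
        have h1 : K < Real.exp s := by
          rw [← hKa]; exact Real.exp_lt_exp.2 hs
        dsimp only
        rw [max_eq_left (by linarith)]
        push_cast
        rw [show c1 * (s : ℂ) = c2 * s + s by simp [c1, c2]; ring, Complex.exp_add,
          ← Complex.ofReal_exp]
        simp only [c2]
        ring
      · intro s hs
        simp only [mem_Ioi, not_lt] at hs
        have h1 : Real.exp s ≤ K := by
          rw [← hKa]; exact Real.exp_le_exp.2 hs
        rw [max_eq_right (by linarith)]
        simp
    rw [heq]; exact key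
  · exact key
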